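/- Let A > 1, K_2 ∈ (0,1), n ∈ ℕ, m ∈ ℕ with m - n(A-1) > 0 and K_1 = L_{nm-1} := (A-1)/(m-n(A-1)) - (1+K_2). Define T = (a_1(1+K_1+K_2)+(a_2-a_1)(1-K_1))/s(K_1) and T_2 = a_1·H_{nm}(K_1)/s(K_1), where s(K_1) = 1-m(K_1-1)+n(1+K_1+K_2) and H_{nm}(K) = [m-n(A-1)](K+K_2+1)(K+2K_2-1) - K[(A-1)(1+K_2)-K_2] + K_2(1+K_2) + (A-1)(1-K_2). Then, provided s(L_{nm-1}) ≠ 0, T_2 = K_2·T. -/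

import Mathlib

theorem stmt_14 (a1 a2 A K1 K2 : ℝ) (n m : ℕ)
    (hA : 1 < A) (hK2 : 0 < K2) (hK2' : K2 < 1)
    (ha1 : 0 < a1) (ha2 : a2 = A * a1)
    (hmn : 0 < (m : ℝ) - (n : ℝ) * (A - 1))
    (hK1 : K1 = (A - 1) / ((m : ℝ) - (n : ℝ) * (A - 1)) - (1 + K2))
    (s H : ℝ → ℝ)
    (hs : ∀ K : ℝ, s K = 1 - (m : ℝ) * (K - 1) + (n : ℝ) * (1 + K + K2))
    (hH : ∀ K : ℝ, H K = ((m : ℝ) - (n : ℝ) * (A - 1)) * (K + K2 + 1) * (K + 2 * K2 - 1)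
      - K * ((A - 1) * (1 + K2) - K2) + K2 * (1 + K2) + (A - 1) * (1 - K2))
    (hsne : s K1 ≠ 0)
    (T T2 : ℝ)
    (hT : T = (a1 * (1 + K1 + K2) + (a2 - a1) * (1 - K1)) / s K1)
    (hT2 : T2 = a1 * H K1 / s K1) :
    T2 = K2 * T := by
  have hD : ((m : ℝ) - (n : ℝ) * (A - 1)) ≠ 0 := ne_of_gt hmn
  have hkey : (K1 + K2 + 1) * ((m : ℝ) - (n : ℝ) * (A - 1)) = A - 1 := by
    rw [hK1, show (A - 1) / ((m : ℝ) - (n : ℝ) * (A - 1)) - (1 + K2) + K2 + 1 = (A - 1) / ((m : ℝ) - (n : ℝ) * (A - 1)) by ring]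
    exact div_mul_cancel₀ _ hD
  have hHval : H K1 = K2 * ((1 + K1 + K2) + (A - 1) * (1 - K1)) := by
    rw [hH]
    have : ((m : ℝ) - (n : ℝ) * (A - 1)) * (K1 + K2 + 1) * (K1 + 2 * K2 - 1)
        = (A - 1) * (K1 + 2 * K2 - 1) := by
      rw [show ((m : ℝ) - (n : ℝ) * (A - 1)) * (K1 + K2 + 1)
        = (K1 + K2 + 1) * ((m : ℝ) - (n : ℝ) * (A - 1)) from mul_comm _ _, hkey]
    rw [this]; ring
  rw [hT2, hT, hHval, ha2]
  field_simp
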